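/- For every normal default theory Δ over a propositional language L there exists a default theory Δ' over L that is both normal and prerequisite-free and is equivalent to Δ, i.e., ext(Δ') = ext(Δ). -/

import Mathlib

/-- Propositional formulas over a set of atoms `α`. -/
inductive PropForm (α : Type) : Type
  | atom : α → PropForm α
  | fls  : PropForm α
  | impl : PropForm α → PropForm α → PropForm α

namespace PropForm

/-- Negation `¬φ`, definable as `φ → ⊥`. -/
def neg {α : Type} (φ : PropForm α) : PropForm α := impl φ fls

/-- Conjunction, definable from implication and falsum. -/
def conj {α : Type} (φ ψ : PropForm α) : PropForm α := (φ.impl ψ.neg).neg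

/-- Biimplication `φ ↔ ψ`. -/
def biimp {α : Type} (φ ψ : PropForm α) : PropForm α := conj (φ.impl ψ) (ψ.impl φ)

/-- Evaluation of a formula under a valuation of the atoms. -/
def eval {α : Type} (v : α → Prop) : PropForm α → Prop
  | atom a   => v a
  | fls      => False
  | impl φ ψ => eval v φ → eval v ψ

/-- Renaming/embedding of atoms. -/
def map {α β : Type} (f : α → β) : PropForm α → PropForm β
  | atom a   => atom (f a)
  | fls      => fls
  | impl φ ψ => impl (map f φ) (map f ψ)

end PropForm

/-- Classical propositional consequence operator. -/
def Cn {α : Type} (S : Set (PropForm α)) : Set (PropForm α) :=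
  {φ | ∀ v : α → Prop, (∀ ψ ∈ S, ψ.eval v) → φ.eval v}

/-- A theory: a set of formulas closed under propositional consequence. -/
def IsTheory {α : Type} (S : Set (PropForm α)) : Prop := Cn S ⊆ S

/-- A set of formulas is consistent if its consequences are not the whole language. -/
def Consistent {α : Type} (S : Set (PropForm α)) : Prop := Cn S ≠ Set.univ

/-- A default `α : Γ / β` with prerequisite, finite set of justifications, consequent. -/
structure Default (α : Type) where
  pre : PropForm α
  jus : Finset (PropForm α)
  con : PropForm α

/-- A default is applicable w.r.t. `S` if no justification's negation follows from `S`. -/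
def Default.Applicable {α : Type} (S : Set (PropForm α)) (d : Default α) : Prop :=
  ∀ γ ∈ d.jus, γ.neg ∉ Cn S

/-- The reduct of `D` w.r.t. `S`: the monotone rules `pre/con` of `S`-applicable defaults. -/
def Reduct {α : Type} (D : Set (Default α)) (S : Set (PropForm α)) :
    Set (PropForm α × PropForm α) :=
  {r | ∃ d ∈ D, d.Applicable S ∧ r = (d.pre, d.con)}

/-- `Cn^B(W)`: consequences of `W` in propositional calculus augmented with rules `B`;
the least set containing `W`, closed under `Cn`, and closed under the rules of `B`. -/
def CnRules {α : Type} (B : Set (PropForm α × PropForm α)) (W : Set (PropForm α)) :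
    Set (PropForm α) :=
  ⋂₀ {S | W ⊆ S ∧ Cn S ⊆ S ∧ ∀ r ∈ B, r.1 ∈ S → r.2 ∈ S}

/-- `S` is an extension of the default theory `(D, W)`. -/
def IsExtension {α : Type} (D : Set (Default α)) (W S : Set (PropForm α)) : Prop :=
  S = CnRules (Reduct D S) W

/-- The family of all extensions of `(D, W)`. -/
def ext {α : Type} (D : Set (Default α)) (W : Set (PropForm α)) : Set (Set (PropForm α)) :=
  {S | IsExtension D W S}

/-- A default is prerequisite-free if its prerequisite is a tautology. -/
def Default.PrereqFree {α : Type} (d : Default α) : Prop :=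
  d.pre ∈ Cn (∅ : Set (PropForm α))

/-- A default is normal if it has the form `α : {β} / β`. -/
def Default.Normal {α : Type} (d : Default α) : Prop := d.jus = {d.con}

section Aux

variable {β : Type}

noncomputable instance : DecidableEq (PropForm β) := Classical.decEq _

/-- A valuation models a set of formulas. -/
def Models (v : β → Prop) (X : Set (PropForm β)) : Prop := ∀ φ ∈ X, φ.eval v

lemma mem_Cn_iff {X : Set (PropForm β)} {φ : PropForm β} :
    φ ∈ Cn X ↔ ∀ v : β → Prop, Models v X → φ.eval v := Iff.rfl

lemma Cn_mono {X Y : Set (PropForm β)} (h : X ⊆ Y) : Cn X ⊆ Cn Y :=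
  fun _ hφ v hv => hφ v fun ψ hψ => hv ψ (h hψ)

lemma subset_Cn {X : Set (PropForm β)} : X ⊆ Cn X :=
  fun φ hφ _ hv => hv φ hφ

lemma Cn_Cn {X : Set (PropForm β)} : Cn (Cn X) ⊆ Cn X :=
  fun φ hφ v hv => hφ v fun ψ hψ => hψ v hv

/-- Our canonical tautology. -/
def taut : PropForm β := PropForm.neg PropForm.fls

lemma taut_mem_Cn (X : Set (PropForm β)) : (taut : PropForm β) ∈ Cn X :=
  fun _ _ h => h

lemma eval_neg {v : β → Prop} {φ : PropForm β} :
    (PropForm.neg φ).eval v ↔ ¬ φ.eval v := Iff.rfl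

lemma eval_conj {v : β → Prop} {φ ψ : PropForm β} :
    (PropForm.conj φ ψ).eval v ↔ φ.eval v ∧ ψ.eval v := by
  simp only [PropForm.conj, PropForm.neg, PropForm.eval]
  tauto

/-! ### Compactness -/

/-- Finite satisfiability. -/
def FinSat (X : Set (PropForm β)) : Prop :=
  ∀ F : Finset (PropForm β), ↑F ⊆ X → ∃ v : β → Prop, ∀ φ ∈ F, φ.eval v

lemma erase_coe_subset {F : Finset (PropForm β)} {a : PropForm β} {X : Set (PropForm β)}
    (hF : ↑F ⊆ insert a X) : ↑(F.erase a) ⊆ X := by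
  intro χ hχ
  have h1 := Finset.mem_erase.1 (Finset.mem_coe.1 hχ)
  rcases hF (Finset.mem_coe.2 h1.2) with h | h
  · exact absurd h h1.1
  · exact h

lemma finset_subset_chain_mem {c : Set (Set (PropForm β))} (hchain : IsChain (· ⊆ ·) c)
    (hcne : c.Nonempty) (F : Finset (PropForm β)) (hF : ↑F ⊆ ⋃₀ c) :
    ∃ Y ∈ c, ↑F ⊆ Y := by
  classical
  induction F using Finset.induction_on with
  | empty => exact ⟨hcne.choose, hcne.choose_spec, by simp⟩
  | @insert φ F hφF ih =>
    have hF' : ↑F ⊆ ⋃₀ c := fun x hx => hF (by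
      exact Finset.mem_coe.2 (Finset.mem_insert_of_mem (Finset.mem_coe.1 hx)))
    obtain ⟨Y₁, hY₁, hFY₁⟩ := ih hF'
    obtain ⟨Y₂, hY₂, hφY₂⟩ : ∃ Y₂ ∈ c, φ ∈ Y₂ := hF (Finset.mem_coe.2 (Finset.mem_insert_self _ _))
    have hgoal : ∀ Y ∈ c, φ ∈ Y → ↑F ⊆ Y → ∃ Y' ∈ c, ↑(insert φ F) ⊆ Y' := by
      intro Y hY hφY hFY
      refine ⟨Y, hY, fun x hx => ?_⟩
      rcases Finset.mem_insert.1 (Finset.mem_coe.1 hx) with rfl | hx'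
      · exact hφY
      · exact hFY hx'
    by_cases heq : Y₁ = Y₂
    · exact hgoal Y₂ hY₂ hφY₂ (heq ▸ hFY₁)
    · rcases hchain hY₁ hY₂ heq with hle | hle
      · exact hgoal Y₂ hY₂ hφY₂ (hFY₁.trans hle)
      · exact hgoal Y₁ hY₁ (hle hφY₂) hFY₁

lemma sat_of_finsat {X : Set (PropForm β)} (h : FinSat X) :
    ∃ v : β → Prop, Models v X := by
  classical
  obtain ⟨M, hXM, hMS, hMmax⟩ :
      ∃ M, X ⊆ M ∧ FinSat M ∧ ∀ Y, FinSat Y → M ⊆ Y → Y ⊆ M := by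
    obtain ⟨m, hxm, hm⟩ := zorn_subset_nonempty {Y : Set (PropForm β) | FinSat Y}
      (fun c hcS hchain hcne => by
        refine ⟨⋃₀ c, ?_, fun s hs => Set.subset_sUnion_of_mem hs⟩
        intro F hF
        obtain ⟨Y, hYc, hFY⟩ := finset_subset_chain_mem hchain hcne F hF
        exact hcS hYc F hFY) X h
    exact ⟨m, hxm, hm.1, fun Y hY hMY => hm.2 hY hMY⟩
  have hmem : ∀ φ : PropForm β, FinSat (insert φ M) → φ ∈ M := by
    intro φ hφ
    exact hMmax _ hφ (Set.subset_insert _ _) (Set.mem_insert _ _)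
  -- satisfy a finite subset of `insert a M` given that `a` holds in suitable models
  have hext : ∀ (a : PropForm β) (G : Finset (PropForm β)), ↑G ⊆ M →
      (∀ u : β → Prop, (∀ χ ∈ G, χ.eval u) → a.eval u) → FinSat (insert a M) := by
    intro a G hGM hG F hF
    obtain ⟨u, hu⟩ := hMS ((F.erase a) ∪ G) (by
      intro χ hχ
      rcases Finset.mem_union.1 (Finset.mem_coe.1 hχ) with h | h
      · exact erase_coe_subset hF (Finset.mem_coe.2 h)
      · exact hGM (Finset.mem_coe.2 h))
    have hau : a.eval u := hG u (fun χ hχ => hu χ (Finset.mem_union_right _ hχ))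
    refine ⟨u, fun χ hχ => ?_⟩
    by_cases hc : χ = a
    · exact hc ▸ hau
    · exact hu χ (Finset.mem_union_left _ (Finset.mem_erase.2 ⟨hc, hχ⟩))
  have hrefute : ∀ φ : PropForm β, φ ∉ M →
      ∃ A : Finset (PropForm β), ↑A ⊆ M ∧ ∀ v : β → Prop, (∀ χ ∈ A, χ.eval v) → ¬ φ.eval v := by
    intro φ hφM
    have h1 : ¬ FinSat (insert φ M) := fun hc => hφM (hmem φ hc)
    simp only [FinSat, not_forall] at h1
    obtain ⟨F, hF, hFnosat⟩ := h1
    refine ⟨F.erase φ, erase_coe_subset hF, ?_⟩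
    intro v hv hφv
    apply hFnosat
    refine ⟨v, fun χ hχ => ?_⟩
    by_cases hc : χ = φ
    · exact hc ▸ hφv
    · exact hv χ (Finset.mem_erase.2 ⟨hc, hχ⟩)
  set v : β → Prop := fun a => PropForm.atom a ∈ M with hv
  have truth : ∀ φ : PropForm β, (φ ∈ M → φ.eval v) ∧ (φ ∉ M → ¬ φ.eval v) := by
    intro φ
    induction φ with
    | atom a => exact ⟨fun h => h, fun h => h⟩
    | fls =>
      refine ⟨fun hfM => ?_, fun _ h => h⟩
      obtain ⟨u, hu⟩ := hMS ({PropForm.fls} : Finset (PropForm β)) (fun χ hχ => by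
        have := Finset.mem_singleton.1 (Finset.mem_coe.1 hχ); subst this; exact hfM)
      exact absurd (hu PropForm.fls (Finset.mem_singleton_self _)) (fun h => h)
    | impl φ ψ ihφ ihψ =>
      constructor
      · intro hmem' hφv
        have hφM : φ ∈ M := by
          by_contra hc
          exact ihφ.2 hc hφv
        have hψM : ψ ∈ M := by
          apply hmem
          refine hext ψ ({φ, PropForm.impl φ ψ} : Finset (PropForm β)) ?_ ?_
          · intro χ hχ
            rcases Finset.mem_insert.1 (Finset.mem_coe.1 hχ) with rfl | h
            · exact hφM
            · exact (Finset.mem_singleton.1 h) ▸ hmem'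
          · intro u hu
            have h1 : (PropForm.impl φ ψ).eval u := hu (PropForm.impl φ ψ) (by simp)
            have h2 : φ.eval u := hu φ (by simp)
            exact h1 h2
        exact ihψ.1 hψM
      · intro hnmem hev
        have hψM : ψ ∉ M := by
          intro hψ
          apply hnmem
          apply hmem
          refine hext (PropForm.impl φ ψ) ({ψ} : Finset (PropForm β)) ?_ ?_
          · intro χ hχ
            have := Finset.mem_singleton.1 (Finset.mem_coe.1 hχ); subst this; exact hψ
          · intro u hu _
            exact hu ψ (Finset.mem_singleton_self _)
        have hφM : φ ∈ M := by
          by_contra hc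
          obtain ⟨A, hAM, hA⟩ := hrefute φ hc
          apply hnmem
          apply hmem
          refine hext (PropForm.impl φ ψ) A hAM ?_
          intro u hu hφu
          exact absurd hφu (hA u hu)
        exact ihψ.2 hψM (hev (ihφ.1 hφM))
  exact ⟨v, fun φ hφ => (truth φ).1 (hXM hφ)⟩

/-- Compactness for `Cn`. -/
lemma Cn_compact {X : Set (PropForm β)} {φ : PropForm β} (h : φ ∈ Cn X) :
    ∃ F : Finset (PropForm β), ↑F ⊆ X ∧ φ ∈ Cn (↑F : Set (PropForm β)) := by
  classical
  by_contra hc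
  push_neg at hc
  have h1 : FinSat (insert (PropForm.neg φ) X) := by
    intro F hF
    have h3 := hc _ (erase_coe_subset hF)
    simp only [mem_Cn_iff, Models, not_forall] at h3
    obtain ⟨u, hu, hnφ⟩ := h3
    refine ⟨u, fun χ hχ => ?_⟩
    by_cases heq : χ = PropForm.neg φ
    · subst heq; exact fun hφu => hnφ hφu
    · exact hu χ (Finset.mem_erase.2 ⟨heq, hχ⟩)
  obtain ⟨v, hv⟩ := sat_of_finsat h1
  have hφv := h v (fun ψ hψ => hv ψ (Set.mem_insert_of_mem _ hψ))
  exact hv (PropForm.neg φ) (Set.mem_insert _ _) hφv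

end Aux

section DefaultAux

variable {β : Type}

/-- Rule-closed sets. -/
def RClosed (B : Set (PropForm β × PropForm β)) (W T : Set (PropForm β)) : Prop :=
  W ⊆ T ∧ Cn T ⊆ T ∧ ∀ r ∈ B, r.1 ∈ T → r.2 ∈ T

lemma CnRules_subset_of {B : Set (PropForm β × PropForm β)} {W T : Set (PropForm β)}
    (h : RClosed B W T) : CnRules B W ⊆ T :=
  Set.sInter_subset_of_mem h

lemma RClosed_CnRules (B : Set (PropForm β × PropForm β)) (W : Set (PropForm β)) :
    RClosed B W (CnRules B W) := by
  refine ⟨?_, ?_, ?_⟩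
  · intro φ hφ
    exact Set.mem_sInter.2 fun T hT => hT.1 hφ
  · intro φ hφ
    exact Set.mem_sInter.2 fun T hT => hT.2.1 (Cn_mono (Set.sInter_subset_of_mem hT) hφ)
  · intro r hr h1
    exact Set.mem_sInter.2 fun T hT => hT.2.2 r hr (Set.mem_sInter.1 h1 T hT)

lemma CnRules_empty (W : Set (PropForm β)) :
    CnRules (∅ : Set (PropForm β × PropForm β)) W = Cn W := by
  apply Set.Subset.antisymm
  · exact CnRules_subset_of ⟨subset_Cn, Cn_Cn, fun r hr => absurd hr (Set.notMem_empty r)⟩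
  · exact fun φ hφ => (RClosed_CnRules _ W).2.1 (Cn_mono (RClosed_CnRules _ W).1 hφ)

/-- The set of consequents of a list of defaults. -/
def consSet (l : List (Default β)) : Set (PropForm β) := {φ | ∃ e ∈ l, φ = e.con}

/-- Grounded chains of defaults. -/
inductive DChain (D : Set (Default β)) (W : Set (PropForm β)) : List (Default β) → Prop
  | nil : DChain D W []
  | snoc (l : List (Default β)) (d : Default β) : DChain D W l → d ∈ D →
      d.pre ∈ Cn (W ∪ consSet l) → DChain D W (l ++ [d])

lemma consSet_mono {l₁ l₂ : List (Default β)} (h : ∀ e ∈ l₁, e ∈ l₂) :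
    consSet l₁ ⊆ consSet l₂ := by
  rintro φ ⟨e, he, rfl⟩
  exact ⟨e, h e he, rfl⟩

lemma DChain.append {D : Set (Default β)} {W : Set (PropForm β)} {l₁ l₂ : List (Default β)}
    (h₁ : DChain D W l₁) (h₂ : DChain D W l₂) : DChain D W (l₁ ++ l₂) := by
  induction h₂ with
  | nil => simpa using h₁
  | snoc l d hl hd hpre ih =>
    rw [← List.append_assoc]
    exact DChain.snoc _ _ ih hd
      (Cn_mono (Set.union_subset_union_right _
        (consSet_mono (fun e he => by simp [he]))) hpre)

/-- Conjunction of a list of formulas. -/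
def listConj : List (PropForm β) → PropForm β
  | [] => taut
  | φ :: L => PropForm.conj φ (listConj L)

lemma eval_listConj {v : β → Prop} (L : List (PropForm β)) :
    (listConj L).eval v ↔ ∀ φ ∈ L, φ.eval v := by
  induction L with
  | nil => simp [listConj, taut, PropForm.neg, PropForm.eval]
  | cons φ L ih => simp [listConj, eval_conj, ih]

/-- All conjunctions of consequents along grounded chains. -/
def chainSet (D : Set (Default β)) (W : Set (PropForm β)) : Set (PropForm β) :=
  {c | ∃ l, DChain D W l ∧ c = listConj (l.map Default.con)}

/-- The chain-conjunctions applicable w.r.t. `S`. -/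
def AS (D : Set (Default β)) (W S : Set (PropForm β)) : Set (PropForm β) :=
  {c | c ∈ chainSet D W ∧ PropForm.neg c ∉ Cn S}

/-- A prerequisite-free normal default. -/
def mkD (c : PropForm β) : Default β := ⟨taut, {c}, c⟩

lemma exists_model_of_not_neg {S : Set (PropForm β)} {c : PropForm β}
    (h : PropForm.neg c ∉ Cn S) : ∃ v, Models v S ∧ c.eval v := by
  have h1 : ¬ ∀ v : β → Prop, Models v S → (PropForm.neg c).eval v := h
  push_neg at h1
  obtain ⟨v, hvS, hvc⟩ := h1
  exact ⟨v, hvS, Classical.byContradiction fun hc => hvc fun he => hc he⟩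

lemma chainConj_mem {T : Set (PropForm β)} (hT : Cn T ⊆ T) {l : List (Default β)}
    (h : ∀ e ∈ l, e.con ∈ T) : listConj (l.map Default.con) ∈ T := by
  apply hT
  intro u hu
  apply (eval_listConj _).2
  intro φ hφ
  rcases List.mem_map.1 hφ with ⟨e, he, rfl⟩
  exact hu e.con (h e he)

lemma CnRules_reduct_mk (CC W S : Set (PropForm β)) :
    CnRules (Reduct (mkD '' CC) S) W
      = Cn (W ∪ {c | c ∈ CC ∧ PropForm.neg c ∉ Cn S}) := by
  set A := {c | c ∈ CC ∧ PropForm.neg c ∉ Cn S} with hA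
  apply Set.Subset.antisymm
  · apply CnRules_subset_of
    refine ⟨fun φ hφ => subset_Cn (Set.mem_union_left _ hφ), Cn_Cn, ?_⟩
    rintro r ⟨d, ⟨c, hcCC, rfl⟩, happ, rfl⟩ _
    have hcA : c ∈ A := ⟨hcCC, happ c (Finset.mem_singleton_self c)⟩
    exact subset_Cn (Set.mem_union_right _ hcA)
  · have hRC := RClosed_CnRules (Reduct (mkD '' CC) S) W
    have hWA : W ∪ A ⊆ CnRules (Reduct (mkD '' CC) S) W := by
      intro φ hφ
      rcases hφ with hφ | hφ
      · exact hRC.1 hφ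
      · refine hRC.2.2 ((taut : PropForm β), φ) ⟨mkD φ, ⟨φ, hφ.1, rfl⟩, ?_, rfl⟩
          (hRC.2.1 (taut_mem_Cn _))
        intro γ hγ
        rw [Finset.mem_singleton.1 hγ]
        exact hφ.2
    exact fun φ hφ => hRC.2.1 (Cn_mono hWA hφ)

lemma chain_cons_mem {D : Set (Default β)} {W S T : Set (PropForm β)}
    (hD : ∀ d ∈ D, d.Normal) (hT : RClosed (Reduct D S) W T)
    {v : β → Prop} (hvS : Models v S) :
    ∀ {l}, DChain D W l → (∀ e ∈ l, e.con.eval v) → ∀ e ∈ l, e.con ∈ T := by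
  intro l hl
  induction hl with
  | nil => intro _ e he; exact absurd he List.not_mem_nil
  | snoc l d hl hd hpre ih =>
    intro hv e he
    have hcons : ∀ e ∈ l, e.con ∈ T := ih (fun e he => hv e (List.mem_append_left _ he))
    rcases List.mem_append.1 he with he | he
    · exact hcons e he
    · have hed : e = d := by simpa using he
      subst hed
      have happ : e.Applicable S := by
        intro γ hγ
        rw [hD e hd] at hγ
        rw [Finset.mem_singleton.1 hγ]
        intro hneg
        exact (hneg v hvS) (hv e (List.mem_append_right _ (by simp)))
      have hpreT : e.pre ∈ T := by
        apply hT.2.1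
        refine Cn_mono (Set.union_subset hT.1 ?_) hpre
        rintro φ ⟨e', he', rfl⟩
        exact hcons e' he'
      exact hT.2.2 (e.pre, e.con) ⟨e, hd, happ, rfl⟩ hpreT

lemma chain_build {D : Set (Default β)} {W : Set (PropForm β)} :
    ∀ (cs : List (PropForm β)), (∀ c ∈ cs, c ∈ chainSet D W) →
    ∃ l, DChain D W l ∧ ∀ v : β → Prop,
      ((∀ c ∈ cs, c.eval v) ↔ ∀ e ∈ l, e.con.eval v) := by
  intro cs
  induction cs with
  | nil => exact fun _ => ⟨[], DChain.nil, by simp⟩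
  | cons c cs ih =>
    intro h
    obtain ⟨lc, hlc, hceq⟩ := h c (by simp)
    obtain ⟨l', hl', hiff⟩ := ih (fun x hx => h x (by simp [hx]))
    refine ⟨lc ++ l', hlc.append hl', fun v => ?_⟩
    constructor
    · intro hv e he
      rcases List.mem_append.1 he with he | he
      · have h1 : c.eval v := hv c (by simp)
        rw [hceq] at h1
        exact (eval_listConj _).1 h1 e.con (List.mem_map_of_mem he)
      · exact (hiff v).1 (fun x hx => hv x (by simp [hx])) e he
    · intro hv x hx
      rcases List.mem_cons.1 hx with rfl | hx
      · rw [hceq]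
        apply (eval_listConj _).2
        intro φ hφ
        rcases List.mem_map.1 hφ with ⟨e, he, rfl⟩
        exact hv e (List.mem_append_left _ he)
      · exact (hiff v).2 (fun e he => hv e (List.mem_append_right _ he)) x hx

lemma rule_closed {D : Set (Default β)} {W S : Set (PropForm β)} (hD : ∀ d ∈ D, d.Normal)
    (hA : AS D W S ⊆ S) {d : Default β} (hd : d ∈ D) (happ : d.Applicable S)
    (hpre : d.pre ∈ Cn (W ∪ AS D W S)) : d.con ∈ Cn (W ∪ AS D W S) := by
  classical
  obtain ⟨F, hFsub, hpreF⟩ := Cn_compact hpre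
  set F₁ := F.filter (fun c => c ∈ AS D W S) with hF₁def
  have hF₁AS : ∀ c ∈ F₁, c ∈ AS D W S := fun c hc => (Finset.mem_filter.1 hc).2
  have hF₁C : ∀ c ∈ F₁.toList, c ∈ chainSet D W :=
    fun c hc => (hF₁AS c (Finset.mem_toList.1 hc)).1
  obtain ⟨l, hl, hiff⟩ := chain_build F₁.toList hF₁C
  have hpre' : d.pre ∈ Cn (W ∪ consSet l) := by
    intro v hv
    apply hpreF
    intro ψ hψ
    have hψF : ψ ∈ F := Finset.mem_coe.1 hψ
    rcases hFsub hψ with h | h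
    · exact hv ψ (Set.mem_union_left _ h)
    · have hψF₁ : ψ ∈ F₁.toList := Finset.mem_toList.2 (Finset.mem_filter.2 ⟨hψF, h⟩)
      have hvl : ∀ e ∈ l, e.con.eval v :=
        fun e he => hv e.con (Set.mem_union_right _ ⟨e, he, rfl⟩)
      exact (hiff v).2 hvl ψ hψF₁
  have hl' : DChain D W (l ++ [d]) := DChain.snoc _ _ hl hd hpre'
  set c' := listConj ((l ++ [d]).map Default.con) with hc'def
  have hc'C : c' ∈ chainSet D W := ⟨l ++ [d], hl', rfl⟩
  have hcon_neg : PropForm.neg d.con ∉ Cn S :=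
    happ d.con (by rw [hD d hd]; exact Finset.mem_singleton_self _)
  have hc'A : c' ∈ AS D W S := by
    refine ⟨hc'C, ?_⟩
    intro hneg
    obtain ⟨v, hvS, hvcon⟩ := exists_model_of_not_neg hcon_neg
    have hvF₁ : ∀ c ∈ F₁.toList, c.eval v :=
      fun c hc => hvS c (hA (hF₁AS c (Finset.mem_toList.1 hc)))
    have hvl : ∀ e ∈ l, e.con.eval v := (hiff v).1 hvF₁
    have hvc' : c'.eval v := by
      rw [hc'def]
      apply (eval_listConj _).2
      intro φ hφ
      rcases List.mem_map.1 hφ with ⟨e, he, rfl⟩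
      rcases List.mem_append.1 he with he | he
      · exact hvl e he
      · have hed : e = d := by simpa using he
        subst hed; exact hvcon
    exact (hneg v hvS) hvc'
  intro v hv
  have hc'v : c'.eval v := hv c' (Set.mem_union_right _ hc'A)
  exact (eval_listConj _).1 hc'v d.con
    (List.mem_map_of_mem (List.mem_append_right _ (by simp)))

lemma ext_iff_AS {D : Set (Default β)} {W S : Set (PropForm β)} (hD : ∀ d ∈ D, d.Normal) :
    IsExtension D W S ↔ S = Cn (W ∪ AS D W S) := by
  constructor
  · intro hS
    have hRC : RClosed (Reduct D S) W S := by
      have h0 := RClosed_CnRules (Reduct D S) W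
      rwa [← hS] at h0
    by_cases hsat : ∃ v, Models v S
    · obtain ⟨v₀, hv₀⟩ := hsat
      have hAsub : AS D W S ⊆ S := by
        rintro c ⟨⟨l, hl, rfl⟩, hneg⟩
        obtain ⟨v, hvS, hvc⟩ := exists_model_of_not_neg hneg
        have hvl : ∀ e ∈ l, e.con.eval v :=
          fun e he => (eval_listConj _).1 hvc e.con (List.mem_map_of_mem he)
        have hconsT := chain_cons_mem hD hRC hvS hl hvl
        exact chainConj_mem hRC.2.1 hconsT
      apply Set.Subset.antisymm
      · have hT : RClosed (Reduct D S) W (Cn (W ∪ AS D W S)) := by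
          refine ⟨fun φ h => subset_Cn (Set.mem_union_left _ h), Cn_Cn, ?_⟩
          rintro r ⟨d, hd, happ, rfl⟩ h1
          exact rule_closed hD hAsub hd happ h1
        conv_lhs => rw [hS]
        exact CnRules_subset_of hT
      · exact fun φ hφ => hRC.2.1 (Cn_mono (Set.union_subset hRC.1 hAsub) hφ)
    · have hCnS : Cn S = Set.univ :=
        Set.eq_univ_of_forall fun φ => fun v hv => (hsat ⟨v, hv⟩).elim
      have hred : Reduct D S = ∅ := by
        ext r
        simp only [Reduct, Set.mem_setOf_eq, Set.mem_empty_iff_false, iff_false]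
        rintro ⟨d, hd, happ, rfl⟩
        have h2 := happ d.con (by rw [hD d hd]; exact Finset.mem_singleton_self _)
        rw [hCnS] at h2
        exact h2 (Set.mem_univ _)
      have hAS : AS D W S = ∅ := by
        ext c
        simp only [AS, Set.mem_setOf_eq, Set.mem_empty_iff_false, iff_false]
        rintro ⟨_, hneg⟩
        rw [hCnS] at hneg
        exact hneg (Set.mem_univ _)
      rw [hAS, Set.union_empty, ← CnRules_empty W, ← hred, ← hS]
  · intro hS
    have hAsub : AS D W S ⊆ S := fun c hc => by
      rw [hS]; exact subset_Cn (Set.mem_union_right _ hc)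
    have hE := RClosed_CnRules (Reduct D S) W
    apply Set.Subset.antisymm
    · -- S ⊆ CnRules
      have hsub : W ∪ AS D W S ⊆ CnRules (Reduct D S) W := by
        apply Set.union_subset hE.1
        rintro c ⟨⟨l, hl, rfl⟩, hneg⟩
        obtain ⟨v, hvS, hvc⟩ := exists_model_of_not_neg hneg
        have hvl : ∀ e ∈ l, e.con.eval v :=
          fun e he => (eval_listConj _).1 hvc e.con (List.mem_map_of_mem he)
        have hconsT := chain_cons_mem hD hE hvS hl hvl
        exact chainConj_mem hE.2.1 hconsT
      conv_lhs => rw [hS]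
      exact fun φ hφ => hE.2.1 (Cn_mono hsub hφ)
    · -- CnRules ⊆ S
      apply CnRules_subset_of
      refine ⟨?_, ?_, ?_⟩
      · rw [hS]; exact fun φ h => subset_Cn (Set.mem_union_left _ h)
      · conv_rhs => rw [hS]
        intro φ hφ
        rw [hS] at hφ
        exact Cn_Cn hφ
      · rintro r ⟨d, hd, happ, rfl⟩ h1
        rw [hS] at h1 ⊢
        exact rule_closed hD hAsub hd happ h1

end DefaultAux

/-- every normal default theory has an equivalent normal
prerequisite-free default theory. -/
theorem normal_prereq_free_equivalent {α : Type} [Denumerable α]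
    (D : Set (Default α)) (W : Set (PropForm α)) (hD : ∀ d ∈ D, d.Normal) :
    ∃ (D' : Set (Default α)) (W' : Set (PropForm α)),
      (∀ d ∈ D', d.Normal ∧ d.PrereqFree) ∧ ext D' W' = ext D W := by
  classical
  refine ⟨mkD '' chainSet D W, W, ?_, ?_⟩
  · rintro d ⟨c, hc, rfl⟩
    exact ⟨rfl, taut_mem_Cn _⟩
  · apply Set.eq_of_subset_of_subset
    · intro S hS
      have h1 : IsExtension (mkD '' chainSet D W) W S := hS
      have h2 : S = Cn (W ∪ AS D W S) := by
        conv_lhs => rw [h1]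
        exact CnRules_reduct_mk _ W S
      exact (ext_iff_AS hD).2 h2
    · intro S hS
      have h1 : IsExtension D W S := hS
      have h2 : S = Cn (W ∪ AS D W S) := (ext_iff_AS hD).1 h1
      show S = CnRules (Reduct (mkD '' chainSet D W) S) W
      rw [CnRules_reduct_mk]
      exact h2
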